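/- Let X, W₁, W₂ be integrable mean-zero jointly independent real random variables and set Y₁ = X + W₁, Y₂ = X + W₂. Then the joint characteristic function φ(s,t) = E[exp(i(sY₁ + tY₂))] satisfies ∂φ/∂s(0, t) = φ_X'(t) φ_{W₂}(t), and φ(0,t) = φ_X(t) φ_{W₂}(t); hence on the set where φ(0,t) ≠ 0, the ratio (∂φ/∂s)(0,t)/φ(0,t) equals the logarithmic derivative φ_X'(t)/φ_X(t). -/

import Mathlib

open MeasureTheory ProbabilityTheory

/-- Characteristic function of a real random variable. -/
noncomputable def cf {Ω : Type*} [MeasurableSpace Ω] (μ : Measure Ω) (X : Ω → ℝ) (u : ℝ) : ℂ :=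
  ∫ ω, Complex.exp (Complex.I * u * X ω) ∂μ

/-- Joint characteristic function of `(X + W₁, X + W₂)`. -/
noncomputable def cf2 {Ω : Type*} [MeasurableSpace Ω] (μ : Measure Ω)
    (X W₁ W₂ : Ω → ℝ) (s t : ℝ) : ℂ :=
  ∫ ω, Complex.exp (Complex.I *
    ((s : ℂ) * ((X ω : ℂ) + W₁ ω) + (t : ℂ) * ((X ω : ℂ) + W₂ ω))) ∂μ

section aux

variable {Ω : Type*} [MeasurableSpace Ω] {μ : Measure Ω} [IsProbabilityMeasure μ]

lemma norm_cexp_I_mul (u c : ℝ) : ‖Complex.exp (Complex.I * u * c)‖ = 1 := by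
  rw [Complex.norm_exp]
  simp

lemma meas_cexp_I_mul {f : Ω → ℝ} (hm : Measurable f) (u : ℝ) :
    Measurable (fun ω => Complex.exp (Complex.I * u * f ω)) := by
  apply Measurable.cexp
  exact measurable_const.mul (Complex.measurable_ofReal.comp hm)

lemma integrable_cexp_I_mul {f : Ω → ℝ} (hm : Measurable f) (u : ℝ) :
    Integrable (fun ω => Complex.exp (Complex.I * u * f ω)) μ := by
  refine (integrable_const (1 : ℝ)).mono' (meas_cexp_I_mul hm u).aestronglyMeasurable ?_
  filter_upwards with ω
  rw [norm_cexp_I_mul]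

lemma hasDerivAt_cexp_aux (c : ℝ) (x : ℝ) :
    HasDerivAt (fun u : ℝ => Complex.exp (Complex.I * u * c))
      (Complex.I * c * Complex.exp (Complex.I * x * c)) x := by
  have h : HasDerivAt (fun z : ℂ => Complex.exp (Complex.I * z * c))
      (Complex.I * c * Complex.exp (Complex.I * x * c)) (x : ℂ) := by
    have h1 : HasDerivAt (fun z : ℂ => Complex.I * z * c) (Complex.I * c) (x : ℂ) := by
      simpa using (((hasDerivAt_id (x : ℂ)).const_mul Complex.I).mul_const (c : ℂ))
    have := h1.cexp
    exact this.congr_deriv (by ring)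
  exact h.comp_ofReal

/-- Derivative of the characteristic function. -/
lemma cf_hasDerivAt {f : Ω → ℝ} (hm : Measurable f) (hi : Integrable f μ) (u : ℝ) :
    HasDerivAt (cf μ f)
      (∫ ω, Complex.I * f ω * Complex.exp (Complex.I * u * f ω) ∂μ) u := by
  have key := hasDerivAt_integral_of_dominated_loc_of_deriv_le (μ := μ)
    (F := fun (x : ℝ) ω => Complex.exp (Complex.I * x * f ω))
    (F' := fun (x : ℝ) ω => Complex.I * f ω * Complex.exp (Complex.I * x * f ω))
    (bound := fun ω => |f ω|) (x₀ := u) (s := Metric.ball u 1) (Metric.ball_mem_nhds u one_pos)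
    ?_ (integrable_cexp_I_mul hm u) ?_ ?_ hi.abs ?_
  · exact key.2
  · filter_upwards with x
    exact (integrable_cexp_I_mul hm x).aestronglyMeasurable
  · exact (((measurable_const.mul (Complex.measurable_ofReal.comp hm)).mul
      (meas_cexp_I_mul hm u))).aestronglyMeasurable
  · filter_upwards with ω x _
    rw [norm_mul, norm_mul, norm_cexp_I_mul, mul_one, Complex.norm_I, one_mul]
    simp
  · filter_upwards with ω x _
    exact hasDerivAt_cexp_aux (f ω) x

/-- Factorization of expectation of a product under independence, complex version. -/
lemma indep_integral_mul {α β : Type*} [MeasurableSpace α] [MeasurableSpace β]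
    {f : Ω → α} {g : Ω → β} (hf : Measurable f) (hg : Measurable g)
    (h : IndepFun f g μ) (φ : α → ℂ) (ψ : β → ℂ) (hφ : Measurable φ) (hψ : Measurable ψ) :
    ∫ ω, φ (f ω) * ψ (g ω) ∂μ = (∫ ω, φ (f ω) ∂μ) * ∫ ω, ψ (g ω) ∂μ := by
  have hmap := (indepFun_iff_map_prod_eq_prod_map_map hf.aemeasurable hg.aemeasurable).mp h
  have h1 : ∫ ω, φ (f ω) * ψ (g ω) ∂μ
      = ∫ p : α × β, φ p.1 * ψ p.2 ∂(μ.map fun ω => (f ω, g ω)) := by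
    rw [integral_map (hf.prodMk hg).aemeasurable]
    exact ((hφ.comp measurable_fst).mul (hψ.comp measurable_snd)).aestronglyMeasurable
  rw [h1, hmap, integral_prod_mul, integral_map hf.aemeasurable hφ.aestronglyMeasurable,
    integral_map hg.aemeasurable hψ.aestronglyMeasurable]

end aux

theorem stmt_17 {Ω : Type*} [MeasurableSpace Ω] (μ : Measure Ω) [IsProbabilityMeasure μ]
    (X W₁ W₂ : Ω → ℝ) (hXm : Measurable X) (hW₁m : Measurable W₁) (hW₂m : Measurable W₂)
    (hX : Integrable X μ) (hW₁ : Integrable W₁ μ) (hW₂ : Integrable W₂ μ)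
    (hmX : ∫ ω, X ω ∂μ = 0) (hmW₁ : ∫ ω, W₁ ω ∂μ = 0) (hmW₂ : ∫ ω, W₂ ω ∂μ = 0)
    (hindep : iIndepFun (m := fun _ => Real.measurableSpace) ![X, W₁, W₂] μ) :
    ∀ t : ℝ,
      deriv (fun s : ℝ => cf2 μ X W₁ W₂ s t) 0 = deriv (cf μ X) t * cf μ W₂ t ∧
      cf2 μ X W₁ W₂ 0 t = cf μ X t * cf μ W₂ t ∧
      (cf2 μ X W₁ W₂ 0 t ≠ 0 →
        deriv (fun s : ℝ => cf2 μ X W₁ W₂ s t) 0 / cf2 μ X W₁ W₂ 0 t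
          = deriv (cf μ X) t / cf μ X t) := by
  intro t
  have hmeas : ∀ i, Measurable (![X, W₁, W₂] i) := by
    intro i
    fin_cases i <;> assumption
  -- factorization of cf2
  have hfact : ∀ s : ℝ, cf2 μ X W₁ W₂ s t = cf μ X (s + t) * cf μ W₂ t * cf μ W₁ s := by
    intro s
    have hindXW₂ : IndepFun (fun ω => (X ω, W₂ ω)) W₁ μ :=
      hindep.indepFun_prodMk hmeas 0 2 1 (by decide) (by decide)
    have hindX2 : IndepFun X W₂ μ := hindep.indepFun (by decide : (0 : Fin 3) ≠ 2)
    have step1 : cf2 μ X W₁ W₂ s t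
        = ∫ ω, (fun p : ℝ × ℝ => Complex.exp (Complex.I * (s + t : ℝ) * p.1) *
            Complex.exp (Complex.I * t * p.2)) (X ω, W₂ ω) *
          (fun w : ℝ => Complex.exp (Complex.I * s * w)) (W₁ ω) ∂μ := by
      unfold cf2
      refine integral_congr_ae (Filter.Eventually.of_forall fun ω => ?_)
      simp only
      rw [← Complex.exp_add, ← Complex.exp_add]
      congr 1
      push_cast
      ring
    rw [step1, indep_integral_mul (hXm.prodMk hW₂m) hW₁m hindXW₂
      (fun p : ℝ × ℝ => Complex.exp (Complex.I * (s + t : ℝ) * p.1) *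
        Complex.exp (Complex.I * t * p.2))
      (fun w : ℝ => Complex.exp (Complex.I * s * w))
      (((meas_cexp_I_mul measurable_fst (s + t))).mul (meas_cexp_I_mul measurable_snd t))
      (meas_cexp_I_mul measurable_id s)]
    have step2 : ∫ ω, (fun p : ℝ × ℝ => Complex.exp (Complex.I * (s + t : ℝ) * p.1) *
            Complex.exp (Complex.I * t * p.2)) (X ω, W₂ ω) ∂μ
        = cf μ X (s + t) * cf μ W₂ t := by
      simp only
      rw [indep_integral_mul hXm hW₂m hindX2
        (fun x : ℝ => Complex.exp (Complex.I * (s + t : ℝ) * x))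
        (fun x : ℝ => Complex.exp (Complex.I * t * x))
        (meas_cexp_I_mul measurable_id (s + t)) (meas_cexp_I_mul measurable_id t)]
      rfl
    rw [step2]
    rfl
  have hcfW₁0 : cf μ W₁ 0 = 1 := by
    unfold cf
    simp
  -- derivative of cf W₁ at 0 is 0
  have hdW₁ : HasDerivAt (cf μ W₁) 0 0 := by
    have h := cf_hasDerivAt hW₁m hW₁ 0
    have hz : (∫ ω, Complex.I * W₁ ω * Complex.exp (Complex.I * (0:ℝ) * W₁ ω) ∂μ) = 0 := by
      simp only [Complex.ofReal_zero, mul_zero, zero_mul, Complex.exp_zero, mul_one]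
      rw [integral_const_mul]
      have h2 : (∫ ω, (W₁ ω : ℂ) ∂μ) = ((∫ ω, W₁ ω ∂μ : ℝ) : ℂ) := integral_ofReal
      rw [h2, hmW₁]
      simp
    rwa [hz] at h
  -- derivative of cf X
  have hdX : HasDerivAt (cf μ X)
      (∫ ω, Complex.I * X ω * Complex.exp (Complex.I * t * X ω) ∂μ) t :=
    cf_hasDerivAt hXm hX t
  set D := ∫ ω, Complex.I * X ω * Complex.exp (Complex.I * t * X ω) ∂μ with hD
  have hderivX : deriv (cf μ X) t = D := hdX.deriv
  -- derivative of s ↦ cf X (s + t) at 0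
  have hdXt : HasDerivAt (fun s : ℝ => cf μ X (s + t)) D 0 := by
    refine HasDerivAt.comp_add_const 0 t ?_
    rw [zero_add]
    exact hdX
  -- derivative of cf2 in s at 0
  have hdcf2 : HasDerivAt (fun s : ℝ => cf2 μ X W₁ W₂ s t) (D * cf μ W₂ t) 0 := by
    have h : HasDerivAt (fun s : ℝ => cf μ X (s + t) * cf μ W₂ t * cf μ W₁ s)
        (D * cf μ W₂ t * cf μ W₁ 0 + cf μ X (0 + t) * cf μ W₂ t * 0) 0 :=
      ((hdXt.mul_const (cf μ W₂ t)).mul hdW₁)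
    have heq : (fun s : ℝ => cf μ X (s + t) * cf μ W₂ t * cf μ W₁ s)
        = fun s : ℝ => cf2 μ X W₁ W₂ s t := by
      funext s; rw [hfact s]
    rw [heq] at h
    simpa [hcfW₁0, zero_add] using h
  have key1 : deriv (fun s : ℝ => cf2 μ X W₁ W₂ s t) 0 = deriv (cf μ X) t * cf μ W₂ t := by
    rw [hdcf2.deriv, hderivX]
  have key2 : cf2 μ X W₁ W₂ 0 t = cf μ X t * cf μ W₂ t := by
    rw [hfact 0, hcfW₁0, mul_one, zero_add]
  refine ⟨key1, key2, fun hne => ?_⟩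
  rw [key2] at hne
  have hW0 : cf μ W₂ t ≠ 0 := fun h => hne (by rw [h, mul_zero])
  rw [key1, key2, mul_div_mul_right _ _ hW0]
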